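/- Let T be a tree, let Supp(T) be the support of the null space of its adjacency matrix, Core(T) = ∪_{v ∈ Supp(T)} N(v) the set of neighbors of supported vertices, and F_N(T) the subgraph induced on vertices outside the closed neighborhood N[Supp(T)]. Then the matching number of T satisfies ν(T) = |Core(T)| + |V(F_N(T))|/2. -/

import Mathlib

open SimpleGraph Matrix

attribute [local instance] Classical.propDecidable

noncomputable section

variable {V : Type*}

/-- A graph is singular if its adjacency matrix (over ℝ) has nontrivial kernel. -/
def IsSingular [Fintype V] (G : SimpleGraph V) : Prop :=
  ∃ x : V → ℝ, x ≠ 0 ∧ G.adjMatrix ℝ *ᵥ x = 0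

/-- The support of the null space of the adjacency matrix. -/
def nullSupp [Fintype V] (G : SimpleGraph V) : Set V :=
  {v | ∃ x : V → ℝ, G.adjMatrix ℝ *ᵥ x = 0 ∧ x v ≠ 0}

/-- The core: all neighbours of supported vertices. -/
def core [Fintype V] (G : SimpleGraph V) : Set V :=
  ⋃ v ∈ nullSupp G, G.neighborSet v

/-- Vertex set of the N-forest: complement of the closed neighbourhood of the support. -/
def fnVerts [Fintype V] (G : SimpleGraph V) : Set V :=
  (nullSupp G ∪ core G)ᶜ

/-- A matching as a set of pairwise disjoint edges of `G`. -/
def IsMatchingSet (G : SimpleGraph V) (M : Set (Sym2 V)) : Prop :=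
  M ⊆ G.edgeSet ∧ M.Pairwise fun e f => ∀ v : V, ¬(v ∈ e ∧ v ∈ f)

/-- `M` saturates `v`. -/
def Saturates (M : Set (Sym2 V)) (v : V) : Prop := ∃ e ∈ M, v ∈ e

/-- A perfect matching saturates every vertex. -/
def IsPerfectMatchingSet (G : SimpleGraph V) (M : Set (Sym2 V)) : Prop :=
  IsMatchingSet G M ∧ ∀ v : V, Saturates M v

/-- Matching number. -/
def matchNum [Fintype V] (G : SimpleGraph V) : ℕ :=
  sSup {n | ∃ M : Set (Sym2 V), IsMatchingSet G M ∧ M.ncard = n}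

/-- Maximum matchings. -/
def IsMaxMatching [Fintype V] (G : SimpleGraph V) (M : Set (Sym2 V)) : Prop :=
  IsMatchingSet G M ∧ M.ncard = matchNum G

/-- Independent set of vertices. -/
def IsIndepSet (G : SimpleGraph V) (I : Set V) : Prop :=
  I.Pairwise fun a b => ¬ G.Adj a b

/-- Independence number. -/
def indepNum [Fintype V] (G : SimpleGraph V) : ℕ :=
  sSup {n | ∃ I : Set V, _root_.IsIndepSet G I ∧ I.ncard = n}

/-- Maximum independent sets. -/
def IsMaxIndep [Fintype V] (G : SimpleGraph V) (I : Set V) : Prop :=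
  _root_.IsIndepSet G I ∧ I.ncard = _root_.indepNum G

/-- The graph `G` with all vertices in `S` deleted (kept as isolated vertices). -/
def avoid (G : SimpleGraph V) (S : Set V) : SimpleGraph V where
  Adj a b := G.Adj a b ∧ a ∉ S ∧ b ∉ S
  symm := ⟨fun a b h => ⟨h.1.symm, h.2.2, h.2.1⟩⟩
  loopless := ⟨fun a h => G.loopless.irrefl a h.1⟩

/-- `G` is unicyclic: connected with as many edges as vertices. -/
def IsUnicyclic [Fintype V] (G : SimpleGraph V) : Prop :=
  G.Connected ∧ G.edgeFinset.card = Fintype.card V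

/-- `C` is the vertex set of the (unique) cycle of `G`:
the induced subgraph on `C` is connected and 2-regular. -/
def IsCycleVerts [Fintype V] (G : SimpleGraph V) (C : Set V) : Prop :=
  C.Nonempty ∧ (G.induce C).Connected ∧ ∀ v : C, (G.induce C).degree v = 2

/-- Vertices of the pendant tree of `G` at the cycle vertex `v`: all vertices
reachable from `v` after deleting the other cycle vertices. -/
def pendantVerts (G : SimpleGraph V) (C : Set V) (v : V) : Set V :=
  {u | (avoid G (C \ {v})).Reachable v u}

lemma mem_pendantVerts_self (G : SimpleGraph V) (C : Set V) (v : V) :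
    v ∈ pendantVerts G C v := Reachable.refl v

/-- The pendant tree of `G` at `v` (as an induced subgraph). -/
def pendantTree (G : SimpleGraph V) (C : Set V) (v : V) :
    SimpleGraph (pendantVerts G C v) := G.induce (pendantVerts G C v)

/-- The rest of the graph, `G − G{v}`. -/
def pendantRest (G : SimpleGraph V) (C : Set V) (v : V) :
    SimpleGraph ((pendantVerts G C v)ᶜ : Set V) := G.induce (pendantVerts G C v)ᶜ

/-- `v` is matched in a graph `H`: every maximum matching of `H` saturates `v`. -/
def MatchedIn {W : Type*} [Fintype W] (H : SimpleGraph W) (w : W) : Prop :=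
  ∀ M : Set (Sym2 W), IsMaxMatching H M → Saturates M w

/-- A unicyclic graph is of Type I if some cycle vertex is matched in its pendant tree. -/
def TypeI [Fintype V] (G : SimpleGraph V) (C : Set V) : Prop :=
  ∃ v ∈ C, MatchedIn (pendantTree G C v) ⟨v, mem_pendantVerts_self G C v⟩

/-- Type II: every cycle vertex is missed by some maximum matching of its pendant tree. -/
def TypeII [Fintype V] (G : SimpleGraph V) (C : Set V) : Prop :=
  ∀ v ∈ C, ¬ MatchedIn (pendantTree G C v) ⟨v, mem_pendantVerts_self G C v⟩

end

section MatchAux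

variable {V : Type*} [Fintype V] {G : SimpleGraph V}

lemma matchSet_nonempty (G : SimpleGraph V) :
    {n | ∃ M : Set (Sym2 V), IsMatchingSet G M ∧ M.ncard = n}.Nonempty :=
  ⟨0, ∅, ⟨Set.empty_subset _, Set.pairwise_empty _⟩, Set.ncard_empty _⟩

lemma matchSet_bddAbove (G : SimpleGraph V) :
    BddAbove {n | ∃ M : Set (Sym2 V), IsMatchingSet G M ∧ M.ncard = n} := by
  refine ⟨(Set.univ : Set (Sym2 V)).ncard, ?_⟩
  rintro n ⟨M, _, rfl⟩
  exact Set.ncard_le_ncard (Set.subset_univ M) Set.finite_univ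

lemma le_matchNum {M : Set (Sym2 V)} (h : IsMatchingSet G M) : M.ncard ≤ matchNum G :=
  le_csSup (matchSet_bddAbove G) ⟨M, h, rfl⟩

lemma matchNum_le {k : ℕ} (h : ∀ M : Set (Sym2 V), IsMatchingSet G M → M.ncard ≤ k) :
    matchNum G ≤ k :=
  csSup_le (matchSet_nonempty G) (by rintro n ⟨M, hM, rfl⟩; exact h M hM)

lemma exists_max_matching (G : SimpleGraph V) :
    ∃ M : Set (Sym2 V), IsMatchingSet G M ∧ M.ncard = matchNum G :=
  Nat.sSup_mem (matchSet_nonempty G) (matchSet_bddAbove G)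

lemma matchNum_eq_zero (h : ∀ a b : V, ¬ G.Adj a b) : matchNum G = 0 := by
  refine Nat.le_zero.mp (matchNum_le fun M hM => ?_)
  have : M = ∅ := by
    refine Set.eq_empty_iff_forall_notMem.mpr fun e he => ?_
    have := hM.1 he
    induction e with
    | h a b => exact h a b this
  simp [this]

end MatchAux
section AvoidAux

variable {V : Type*} [Fintype V] {G : SimpleGraph V} {u v : V}

lemma avoid_adj {S : Set V} {a b : V} :
    (avoid G S).Adj a b ↔ G.Adj a b ∧ a ∉ S ∧ b ∉ S := Iff.rfl

lemma avoid_le {S : Set V} : avoid G S ≤ G := fun _ _ h => h.1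

lemma mem_avoid_edgeSet {S : Set V} {e : Sym2 V} (he : e ∈ G.edgeSet)
    (hS : ∀ a ∈ e, a ∉ S) : e ∈ (avoid G S).edgeSet := by
  induction e with
  | h a b =>
    exact ⟨he, hS a (Sym2.mem_mk_left a b), hS b (Sym2.mem_mk_right a b)⟩

lemma avoid_edgeSet_subset {S : Set V} : (avoid G S).edgeSet ⊆ G.edgeSet :=
  SimpleGraph.edgeSet_mono avoid_le

lemma not_mem_of_mem_avoid_edge {e : Sym2 V} (he : e ∈ (avoid G (({u} : Set V))).edgeSet) :
    u ∉ e := by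
  induction e with
  | h a b =>
    intro hm
    rcases Sym2.mem_iff.mp hm with rfl | rfl
    · exact he.2.1 rfl
    · exact he.2.2 rfl

/-- In the avoid-`u` graph, a leaf `v` of `u` is isolated. -/
lemma leaf_not_mem_avoid_edge (hleaf : ∀ z, G.Adj v z → z = u)
    {e : Sym2 V} (he : e ∈ (avoid G (({u} : Set V))).edgeSet) : v ∉ e := by
  induction e with
  | h a b =>
    intro hm
    rcases Sym2.mem_iff.mp hm with rfl | rfl
    · exact he.2.2 (hleaf b he.1)
    · exact he.2.1 (hleaf a he.1.symm)

lemma matchNum_leaf_step (huv : G.Adj u v) (hleaf : ∀ z, G.Adj v z → z = u) :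
    matchNum G = matchNum (avoid G ({u} : Set V)) + 1 := by
  set G' := avoid G ({u} : Set V) with hG'
  apply le_antisymm
  · -- ≤ : take a max matching of G, remove the edge at u if any
    refine matchNum_le fun M hM => ?_
    by_cases hu : ∃ e ∈ M, u ∈ e
    · obtain ⟨e, heM, hue⟩ := hu
      have hM' : IsMatchingSet G' (M \ {e}) := by
        constructor
        · rintro f ⟨hfM, hfe⟩
          refine mem_avoid_edgeSet (hM.1 hfM) ?_
          rintro a haf rfl
          exact (hM.2 heM hfM (Ne.symm hfe) a ⟨hue, haf⟩)
        · exact hM.2.mono Set.diff_subset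
      have hcard : (M \ {e}).ncard = M.ncard - 1 := by
        rw [Set.ncard_diff_singleton_of_mem heM]
      have h1 : 1 ≤ M.ncard := (Set.ncard_pos (Set.toFinite M)).mpr ⟨e, heM⟩
      have := le_matchNum hM'
      omega
    · push_neg at hu
      have hM' : IsMatchingSet G' M := by
        refine ⟨fun f hf => mem_avoid_edgeSet (hM.1 hf) ?_, hM.2⟩
        rintro a haf rfl
        exact hu f hf haf
      have := le_matchNum hM'
      omega
  · -- ≥ : take a max matching of G', add the edge u-v
    obtain ⟨M', hM', hc⟩ := exists_max_matching G'
    have heM' : s(u, v) ∉ M' := fun h => not_mem_of_mem_avoid_edge (hM'.1 h) (Sym2.mem_mk_left u v)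
    have hMm : IsMatchingSet G (insert s(u, v) M') := by
      constructor
      · rintro f (rfl | hf)
        · exact huv
        · exact avoid_edgeSet_subset (hM'.1 hf)
      · haveI : Std.Symm (fun e f : Sym2 V => ∀ v : V, ¬(v ∈ e ∧ v ∈ f)) :=
          ⟨fun e f h z hz => h z ⟨hz.2, hz.1⟩⟩
        rw [Set.pairwise_insert_of_symmetric]
        · refine ⟨hM'.2, fun f hf _ z ⟨hz1, hz2⟩ => ?_⟩
          rcases Sym2.mem_iff.mp hz1 with rfl | rfl
          · exact not_mem_of_mem_avoid_edge (hM'.1 hf) hz2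
          · exact leaf_not_mem_avoid_edge hleaf (hM'.1 hf) hz2
      
    have := le_matchNum hMm
    rw [Set.ncard_insert_of_notMem heM' (Set.toFinite M'), hc] at this
    omega

end AvoidAux
section KerAux

variable {V : Type*} [Fintype V] {G : SimpleGraph V} {u v : V}

lemma ker_row {x : V → ℝ} (hx : G.adjMatrix ℝ *ᵥ x = 0) (z : V) :
    ∑ y ∈ G.neighborFinset z, x y = 0 := by
  have h := congrFun hx z
  rwa [SimpleGraph.adjMatrix_mulVec_apply] at h

lemma ker_of_rows {H : SimpleGraph V} {y : V → ℝ}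
    (h : ∀ z, ∑ t ∈ H.neighborFinset z, y t = 0) : H.adjMatrix ℝ *ᵥ y = 0 :=
  funext fun z => by rw [SimpleGraph.adjMatrix_mulVec_apply, h z]; rfl

lemma leaf_neighborFinset (huv : G.Adj u v) (hleaf : ∀ z, G.Adj v z → z = u) :
    G.neighborFinset v = {u} := by
  ext t
  simp only [SimpleGraph.mem_neighborFinset, Finset.mem_singleton]
  exact ⟨fun h => hleaf t h, fun h => h ▸ huv.symm⟩

lemma ker_val_u {x : V → ℝ} (huv : G.Adj u v) (hleaf : ∀ z, G.Adj v z → z = u)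
    (hx : G.adjMatrix ℝ *ᵥ x = 0) : x u = 0 := by
  have h := ker_row hx v
  rwa [leaf_neighborFinset huv hleaf, Finset.sum_singleton] at h

lemma sum_drop_of_zero {f : V → ℝ} (s : Finset V) (hfu : f u = 0) :
    ∑ t ∈ s \ {u}, f t = ∑ t ∈ s, f t := by
  by_cases hu : u ∈ s
  · rw [Finset.sum_eq_sum_sdiff_singleton_add hu f, hfu, add_zero]
  · rw [Finset.sdiff_singleton_eq_erase, Finset.erase_eq_of_notMem hu]

lemma avoid_neighborFinset_ne {z : V} (hz : z ≠ u) :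
    (avoid G ({u} : Set V)).neighborFinset z = G.neighborFinset z \ {u} := by
  ext t
  simp only [SimpleGraph.mem_neighborFinset, Finset.mem_sdiff, Finset.mem_singleton]
  constructor
  · rintro ⟨h, _, ht⟩; exact ⟨h, ht⟩
  · rintro ⟨h, ht⟩; exact ⟨h, hz, ht⟩

lemma avoid_neighborFinset_self :
    (avoid G ({u} : Set V)).neighborFinset u = ∅ := by
  ext t
  simp only [SimpleGraph.mem_neighborFinset, Finset.notMem_empty, iff_false]
  rintro ⟨_, hu, _⟩
  exact hu rfl

lemma u_not_mem_nullSupp (huv : G.Adj u v) (hleaf : ∀ z, G.Adj v z → z = u) :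
    u ∉ nullSupp G := by
  rintro ⟨x, hker, hxu⟩
  exact hxu (ker_val_u huv hleaf hker)

lemma isolated_mem_nullSupp {H : SimpleGraph V} {c : V} (hiso : ∀ z, ¬ H.Adj z c) :
    c ∈ nullSupp H := by
  refine ⟨fun t => if t = c then 1 else 0, ker_of_rows fun z => Finset.sum_eq_zero ?_, by simp⟩
  intro t ht
  rw [SimpleGraph.mem_neighborFinset] at ht
  have : t ≠ c := fun h => hiso z (h ▸ ht)
  simp [this]

lemma u_mem_nullSupp_avoid : u ∈ nullSupp (avoid G ({u} : Set V)) :=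
  isolated_mem_nullSupp fun z h => h.2.2 rfl

lemma v_mem_nullSupp_avoid (hleaf : ∀ z, G.Adj v z → z = u) :
    v ∈ nullSupp (avoid G ({u} : Set V)) :=
  isolated_mem_nullSupp fun z h => h.2.1 (hleaf z h.1.symm)

lemma supp_to_avoid (huv : G.Adj u v) (hleaf : ∀ z, G.Adj v z → z = u) {z : V}
    (hzu : z ≠ u) (hzv : z ≠ v) (h : z ∈ nullSupp G) :
    z ∈ nullSupp (avoid G ({u} : Set V)) := by
  obtain ⟨x, hker, hxz⟩ := h
  refine ⟨fun t => if t = u ∨ t = v then 0 else x t, ker_of_rows fun t => ?_, by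
    simp only [hzu, hzv, or_self, if_false]; exact hxz⟩
  by_cases htu : t = u
  · subst htu; rw [avoid_neighborFinset_self]; simp
  · rw [avoid_neighborFinset_ne htu]
    have hcongr : ∀ t' ∈ G.neighborFinset t \ {u},
        (if t' = u ∨ t' = v then (0:ℝ) else x t') = x t' := by
      intro t' ht'
      rw [Finset.mem_sdiff, Finset.mem_singleton] at ht'
      have ht'v : t' ≠ v := by
        rintro rfl
        exact htu (hleaf t ((SimpleGraph.mem_neighborFinset _ _ _).mp ht'.1).symm)
      simp [ht'.2, ht'v]
    rw [Finset.sum_congr rfl hcongr,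
      sum_drop_of_zero _ (ker_val_u huv hleaf hker)]
    exact ker_row hker t

lemma supp_of_avoid (huv : G.Adj u v) (hleaf : ∀ z, G.Adj v z → z = u) {z : V}
    (hzu : z ≠ u) (hzv : z ≠ v) (h : z ∈ nullSupp (avoid G ({u} : Set V))) :
    z ∈ nullSupp G := by
  obtain ⟨y, hker, hyz⟩ := h
  set xv : ℝ := -(∑ w ∈ G.neighborFinset u \ {v}, y w) with hxv
  refine ⟨fun t => if t = u then 0 else if t = v then xv else y t,
    ker_of_rows fun t => ?_, by simp only [hzu, hzv, if_false]; exact hyz⟩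
  by_cases htv : t = v
  · subst htv
    rw [leaf_neighborFinset huv hleaf, Finset.sum_singleton]
    simp
  by_cases htu : t = u
  · subst htu
    have hv : v ∈ G.neighborFinset t := (SimpleGraph.mem_neighborFinset _ _ _).mpr huv
    rw [Finset.sum_eq_sum_sdiff_singleton_add hv]
    have hcongr : ∀ t' ∈ G.neighborFinset t \ {v},
        (if t' = t then (0:ℝ) else if t' = v then xv else y t') = y t' := by
      intro t' ht'
      rw [Finset.mem_sdiff, Finset.mem_singleton] at ht'
      have : t' ≠ t := (G.ne_of_adj ((SimpleGraph.mem_neighborFinset _ _ _).mp ht'.1)).symm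
      simp [this, ht'.2]
    rw [Finset.sum_congr rfl hcongr]
    have hvt : v ≠ t := huv.ne'
    simp [hvt, hxv]
  · -- generic vertex
    have hvnot : ∀ t' ∈ G.neighborFinset t, t' ≠ v := by
      intro t' ht' h'
      subst h'
      exact htu (hleaf t ((SimpleGraph.mem_neighborFinset _ _ _).mp ht').symm)
    have hrow := ker_row hker t
    rw [avoid_neighborFinset_ne htu] at hrow
    have hcongr : ∀ t' ∈ G.neighborFinset t \ {u},
        (if t' = u then (0:ℝ) else if t' = v then xv else y t') = y t' := by
      intro t' ht'
      rw [Finset.mem_sdiff, Finset.mem_singleton] at ht'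
      simp [ht'.2, hvnot t' ht'.1]
    calc ∑ t' ∈ G.neighborFinset t,
          (if t' = u then (0:ℝ) else if t' = v then xv else y t')
        = ∑ t' ∈ G.neighborFinset t \ {u},
          (if t' = u then (0:ℝ) else if t' = v then xv else y t') := by
          rw [sum_drop_of_zero _ (by simp)]
      _ = ∑ t' ∈ G.neighborFinset t \ {u}, y t' := Finset.sum_congr rfl hcongr
      _ = 0 := hrow

end KerAux
section CompAux

variable {V : Type*} [Fintype V] {G : SimpleGraph V} {u v : V}

lemma isolated_reachable_eq {H : SimpleGraph V} {b c : V}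
    (hiso : ∀ z, ¬ H.Adj z c) (h : H.Reachable b c) : b = c := by
  by_contra hbc
  obtain ⟨p⟩ := h.symm
  obtain ⟨w, hw, -, -⟩ := SimpleGraph.Walk.exists_eq_cons_of_ne (Ne.symm hbc) p
  exact hiso w hw.symm

lemma avoid_le_sdiff {w : V} (huw : G.Adj u w) :
    avoid G ({u} : Set V) ≤ G \ SimpleGraph.fromEdgeSet {s(u, w)} := by
  rintro a b ⟨hab, ha, hb⟩
  rw [SimpleGraph.sdiff_adj]
  refine ⟨hab, fun hf => ?_⟩
  rw [SimpleGraph.fromEdgeSet_adj, Set.mem_singleton_iff, Sym2.eq_iff] at hf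
  rcases hf.1 with ⟨rfl, rfl⟩ | ⟨rfl, rfl⟩
  · exact ha rfl
  · exact hb rfl

/-- If `z ≠ w` is reachable from `w` avoiding `u`, then `z` is not a neighbour of `u`
(acyclicity). -/
lemma unique_attach (hA : G.IsAcyclic) {w z : V} (huw : G.Adj u w)
    (hz : (avoid G ({u} : Set V)).Reachable w z) (huz : G.Adj u z) : z = w := by
  by_contra hzw
  have hb := SimpleGraph.isAcyclic_iff_forall_adj_isBridge.mp hA huw
  rw [SimpleGraph.isBridge_iff] at hb
  refine hb ?_
  have hreach : (G \ SimpleGraph.fromEdgeSet {s(u, w)}).Reachable w z :=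
    hz.mono (avoid_le_sdiff huw)
  have hadj : (G \ SimpleGraph.fromEdgeSet {s(u, w)}).Adj u z := by
    rw [SimpleGraph.sdiff_adj]
    refine ⟨huz, fun hf => ?_⟩
    rw [SimpleGraph.fromEdgeSet_adj, Set.mem_singleton_iff, Sym2.eq_iff] at hf
    rcases hf.1 with ⟨-, rfl⟩ | ⟨rfl, rfl⟩
    · exact hzw rfl
    · exact G.loopless.irrefl _ huz
  exact hadj.reachable.trans hreach.symm

lemma supp_leaf_of_supp_neighbor (hA : G.IsAcyclic) (huv : G.Adj u v)
    (hleaf : ∀ z, G.Adj v z → z = u) {w : V} (huw : G.Adj u w) (hwv : w ≠ v)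
    (hw : w ∈ nullSupp G) : v ∈ nullSupp G := by
  obtain ⟨x, hker, hxw⟩ := hw
  set G' := avoid G ({u} : Set V) with hG'
  set S : Set V := {z | G'.Reachable w z} with hS
  have hwS : w ∈ S := SimpleGraph.Reachable.refl w
  have huS : u ∉ S := by
    intro h
    exact huw.ne' (isolated_reachable_eq (fun z (h2 : (avoid G ({u} : Set V)).Adj z u) => h2.2.2 rfl) h)
  have hvS : v ∉ S := by
    intro h
    exact hwv (isolated_reachable_eq (fun z (h2 : (avoid G ({u} : Set V)).Adj z v) => h2.2.1 (hleaf z h2.1.symm)) h)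
  have hclos : ∀ {a b : V}, a ∈ S → G.Adj a b → b ≠ u → b ∈ S := by
    intro a b ha hab hbu
    have hau : a ≠ u := fun h => huS (h ▸ ha)
    exact ha.trans (SimpleGraph.Adj.reachable ⟨hab, hau, hbu⟩)
  set y : V → ℝ := fun t => if t ∈ S then x t else if t = v then -(x w) else 0 with hy
  have hyv : y v = -(x w) := by simp [hy, hvS]
  refine ⟨y, ker_of_rows fun t => ?_, by rw [hyv]; exact neg_ne_zero.mpr hxw⟩
  by_cases htv : t = v
  · subst htv
    rw [leaf_neighborFinset huv hleaf, Finset.sum_singleton]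
    simp [hy, huS, huv.ne, huv.ne']
  by_cases htu : t = u
  · subst htu
    have hsub : ({v, w} : Finset V) ⊆ G.neighborFinset t := by
      intro a ha
      rcases Finset.mem_insert.mp ha with rfl | ha
      · exact (SimpleGraph.mem_neighborFinset _ _ _).mpr huv
      · rw [Finset.mem_singleton] at ha
        exact ha ▸ (SimpleGraph.mem_neighborFinset _ _ _).mpr huw
    rw [← Finset.sum_subset hsub]
    · rw [Finset.sum_pair (Ne.symm hwv)]
      have hyw : y w = x w := by simp [hy, hwS]
      rw [hyv, hyw, neg_add_cancel]
    · intro a ha hanot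
      have haS : a ∉ S := by
        intro haS'
        have := unique_attach hA huw haS' ((SimpleGraph.mem_neighborFinset _ _ _).mp ha)
        exact hanot (by simp [this])
      have hav : a ≠ v := fun h => hanot (by simp [h])
      simp [hy, haS, hav]
  by_cases htS : t ∈ S
  · have hcongr : ∀ a ∈ G.neighborFinset t, y a = x a := by
      intro a ha
      rw [SimpleGraph.mem_neighborFinset] at ha
      by_cases hau : a = u
      · subst hau
        rw [ker_val_u huv hleaf hker]
        simp [hy, huS, huv.ne]
      · have : a ∈ S := hclos htS ha hau
        simp [hy, this]
    rw [Finset.sum_congr rfl hcongr]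
    exact ker_row hker t
  · refine Finset.sum_eq_zero fun a ha => ?_
    rw [SimpleGraph.mem_neighborFinset] at ha
    have haS : a ∉ S := fun h => htS (hclos h ha.symm htu)
    have hav : a ≠ v := by
      rintro rfl
      exact htu (hleaf t ha.symm)
    simp [hy, haS, hav]

end CompAux
section CoreAux

variable {V : Type*} [Fintype V] {G : SimpleGraph V} {u v : V}

lemma mem_core_iff {H : SimpleGraph V} {z : V} :
    z ∈ core H ↔ ∃ t ∈ nullSupp H, H.Adj t z := by
  simp [core, SimpleGraph.mem_neighborSet]

lemma mem_fnVerts_iff {H : SimpleGraph V} {z : V} :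
    z ∈ fnVerts H ↔ z ∉ nullSupp H ∧ z ∉ core H := by
  simp [fnVerts]

lemma u_not_core_avoid : u ∉ core (avoid G ({u} : Set V)) := by
  rw [mem_core_iff]
  rintro ⟨t, -, hadj⟩
  exact hadj.2.2 rfl

lemma v_not_core_avoid (hleaf : ∀ z, G.Adj v z → z = u) :
    v ∉ core (avoid G ({u} : Set V)) := by
  rw [mem_core_iff]
  rintro ⟨t, -, hadj⟩
  exact hadj.2.1 (hleaf t hadj.1.symm)

lemma v_not_core (huv : G.Adj u v) (hleaf : ∀ z, G.Adj v z → z = u) : v ∉ core G := by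
  rw [mem_core_iff]
  rintro ⟨t, ht, hadj⟩
  exact u_not_mem_nullSupp huv hleaf (hleaf t hadj.symm ▸ ht)

lemma core_transfer (huv : G.Adj u v) (hleaf : ∀ z, G.Adj v z → z = u) {z : V}
    (hz : z ≠ u) : z ∈ core G ↔ z ∈ core (avoid G ({u} : Set V)) := by
  rw [mem_core_iff, mem_core_iff]
  constructor
  · rintro ⟨t, ht, hadj⟩
    have htu : t ≠ u := fun h => u_not_mem_nullSupp huv hleaf (h ▸ ht)
    have htv : t ≠ v := by rintro rfl; exact hz (hleaf z hadj)
    exact ⟨t, supp_to_avoid huv hleaf htu htv ht, hadj, htu, hz⟩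
  · rintro ⟨t, ht, hadj⟩
    have htu : t ≠ u := hadj.2.1
    have htv : t ≠ v := by rintro rfl; exact hz (hleaf z hadj.1)
    exact ⟨t, supp_of_avoid huv hleaf htu htv ht, hadj.1⟩

lemma u_core_iff (hA : G.IsAcyclic) (huv : G.Adj u v) (hleaf : ∀ z, G.Adj v z → z = u) :
    u ∈ core G ↔ v ∈ nullSupp G := by
  rw [mem_core_iff]
  constructor
  · rintro ⟨t, ht, hadj⟩
    by_cases htv : t = v
    · exact htv ▸ ht
    · exact supp_leaf_of_supp_neighbor hA huv hleaf hadj.symm htv ht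
  · intro hv
    exact ⟨v, hv, huv.symm⟩

lemma rhs_leaf_step (hA : G.IsAcyclic) (huv : G.Adj u v) (hleaf : ∀ z, G.Adj v z → z = u) :
    (core G).ncard + (fnVerts G).ncard / 2
      = (core (avoid G ({u} : Set V))).ncard + (fnVerts (avoid G ({u} : Set V))).ncard / 2
        + 1 := by
  set G' := avoid G ({u} : Set V) with hG'
  have hne : u ≠ v := huv.ne
  by_cases hv : v ∈ nullSupp G
  · -- Case A : v is supported
    have hcore : core G = insert u (core G') := by
      ext z
      by_cases hz : z = u
      · subst hz
        simp only [Set.mem_insert_iff, true_or, iff_true]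
        exact (u_core_iff hA huv hleaf).mpr hv
      · rw [core_transfer huv hleaf hz]
        simp [hz, hG']
    have hfn : fnVerts G = fnVerts G' := by
      ext z
      rw [mem_fnVerts_iff, mem_fnVerts_iff]
      by_cases hz : z = u
      · subst hz
        have h1 : z ∈ core G := (u_core_iff hA huv hleaf).mpr hv
        have h2 : z ∈ nullSupp G' := u_mem_nullSupp_avoid
        simp [h1, h2]
      by_cases hzv : z = v
      · subst hzv
        have h2 : z ∈ nullSupp G' := v_mem_nullSupp_avoid hleaf
        simp [hv, h2]
      · constructor
        · rintro ⟨h1, h2⟩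
          exact ⟨fun h => h1 (supp_of_avoid huv hleaf hz hzv h),
            fun h => h2 ((core_transfer huv hleaf hz).mpr h)⟩
        · rintro ⟨h1, h2⟩
          exact ⟨fun h => h1 (supp_to_avoid huv hleaf hz hzv h),
            fun h => h2 ((core_transfer huv hleaf hz).mp h)⟩
    rw [hcore, hfn, Set.ncard_insert_of_notMem u_not_core_avoid (Set.toFinite _)]
    rw [hG']
    omega
  · -- Case B : v is not supported
    have hucore : u ∉ core G := fun h => hv ((u_core_iff hA huv hleaf).mp h)
    have hcore : core G = core G' := by
      ext z
      by_cases hz : z = u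
      · subst hz
        simp only [hG']
        simp [hucore, u_not_core_avoid]
      · exact core_transfer huv hleaf hz
    have hfn : fnVerts G = insert u (insert v (fnVerts G')) := by
      ext z
      by_cases hz : z = u
      · subst hz
        simp only [Set.mem_insert_iff, true_or, iff_true, mem_fnVerts_iff]
        exact ⟨u_not_mem_nullSupp huv hleaf, hucore⟩
      by_cases hzv : z = v
      · subst hzv
        simp only [Set.mem_insert_iff, true_or, or_true, iff_true, mem_fnVerts_iff]
        exact ⟨hv, v_not_core huv hleaf⟩
      · rw [mem_fnVerts_iff]
        simp only [Set.mem_insert_iff, hz, hzv, false_or, mem_fnVerts_iff]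
        constructor
        · rintro ⟨h1, h2⟩
          exact ⟨fun h => h1 (supp_of_avoid huv hleaf hz hzv h),
            fun h => h2 ((core_transfer huv hleaf hz).mpr h)⟩
        · rintro ⟨h1, h2⟩
          exact ⟨fun h => h1 (supp_to_avoid huv hleaf hz hzv h),
            fun h => h2 ((core_transfer huv hleaf hz).mp h)⟩
    have huf : u ∉ insert v (fnVerts G') := by
      simp only [Set.mem_insert_iff, mem_fnVerts_iff]
      rintro (rfl | ⟨h1, -⟩)
      · exact hne rfl
      · exact h1 u_mem_nullSupp_avoid
    have hvf : v ∉ fnVerts G' := fun h => (mem_fnVerts_iff.mp h).1 (v_mem_nullSupp_avoid hleaf)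
    rw [hcore, hfn, Set.ncard_insert_of_notMem huf (Set.toFinite _),
      Set.ncard_insert_of_notMem hvf (Set.toFinite _)]
    rw [hG']
    omega
  
end CoreAux
section LeafAux

open SimpleGraph.Walk

variable {V : Type*} [Fintype V] {G : SimpleGraph V}

lemma end_not_mem_takeUntil {a b z : V} {p : G.Walk a b} (hp : p.IsPath)
    (hsup : z ∈ p.support) (hzb : z ≠ b) : b ∉ (p.takeUntil z hsup).support := by
  intro hb
  have hspec := p.take_spec hsup
  have hnodup : ((p.takeUntil z hsup).append (p.dropUntil z hsup)).support.Nodup := by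
    rw [hspec]; exact hp.support_nodup
  rw [SimpleGraph.Walk.support_append] at hnodup
  have hb2 : b ∈ (p.dropUntil z hsup).support.tail := by
    have hend := (p.dropUntil z hsup).end_mem_support
    rw [SimpleGraph.Walk.support_eq_cons (p.dropUntil z hsup)] at hend
    rcases List.mem_cons.mp hend with h | h
    · exact absurd h.symm hzb
    · exact h
  exact List.disjoint_of_nodup_append hnodup hb hb2

lemma exists_leaf (hA : G.IsAcyclic) {a0 b0 : V} (h0 : G.Adj a0 b0) :
    ∃ u v : V, G.Adj u v ∧ ∀ z, G.Adj v z → z = u := by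
  set P : Set ℕ := {n | ∃ (a b : V) (p : G.Walk a b), p.IsPath ∧ p.length = n} with hPdef
  have hbdd : BddAbove P := by
    refine ⟨Fintype.card V, ?_⟩
    rintro n ⟨a, b, p, hp, rfl⟩
    exact le_of_lt hp.length_lt
  have h1P : (1 : ℕ) ∈ P :=
    ⟨a0, b0, (SimpleGraph.Path.singleton h0).1, (SimpleGraph.Path.singleton h0).2, rfl⟩
  obtain ⟨a, b, p, hp, hlen⟩ := Nat.sSup_mem ⟨1, h1P⟩ hbdd
  have hN1 : 1 ≤ sSup P := le_csSup hbdd h1P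
  have hab : a ≠ b := by
    rintro rfl
    rw [(SimpleGraph.Walk.isPath_iff_eq_nil (p := p)).mp hp] at hlen
    simp at hlen
    omega
  -- b has a neighbour
  obtain ⟨u0, hbu0, -, -⟩ := SimpleGraph.Walk.exists_eq_cons_of_ne (Ne.symm hab) p.reverse
  -- every neighbour of b lies on p
  have hkey : ∀ z, G.Adj b z → z ∈ p.support := by
    intro z hz
    by_contra hzs
    have hq : (p.concat hz).IsPath := by
      rw [← SimpleGraph.Walk.isPath_reverse_iff, SimpleGraph.Walk.reverse_concat]
      rw [SimpleGraph.Walk.cons_isPath_iff]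
      refine ⟨(SimpleGraph.Walk.isPath_reverse_iff p).mpr hp, ?_⟩
      rwa [SimpleGraph.Walk.support_reverse, List.mem_reverse]
    have : p.length + 1 ∈ P := ⟨a, z, p.concat hz, hq, by
      rw [SimpleGraph.Walk.length_concat]⟩
    have := le_csSup hbdd this
    omega
  -- any two neighbours of b coincide
  have huniq : ∀ z1 z2, G.Adj b z1 → G.Adj b z2 → z1 = z2 := by
    intro z1 z2 h1 h2
    have hs1 := hkey z1 h1
    have hs2 := hkey z2 h2
    have hq1 : ((p.takeUntil z1 hs1).concat h1.symm).IsPath := by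
      rw [← SimpleGraph.Walk.isPath_reverse_iff, SimpleGraph.Walk.reverse_concat,
        SimpleGraph.Walk.cons_isPath_iff]
      refine ⟨(SimpleGraph.Walk.isPath_reverse_iff _).mpr (hp.takeUntil hs1), ?_⟩
      rw [SimpleGraph.Walk.support_reverse, List.mem_reverse]
      exact end_not_mem_takeUntil hp hs1 h1.ne'
    have hq2 : ((p.takeUntil z2 hs2).concat h2.symm).IsPath := by
      rw [← SimpleGraph.Walk.isPath_reverse_iff, SimpleGraph.Walk.reverse_concat,
        SimpleGraph.Walk.cons_isPath_iff]
      refine ⟨(SimpleGraph.Walk.isPath_reverse_iff _).mpr (hp.takeUntil hs2), ?_⟩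
      rw [SimpleGraph.Walk.support_reverse, List.mem_reverse]
      exact end_not_mem_takeUntil hp hs2 h2.ne'
    have hpu := SimpleGraph.isAcyclic_iff_path_unique.mp hA
      (⟨_, hq1⟩ : G.Path a b) (⟨_, hq2⟩ : G.Path a b)
    have hww := congrArg Subtype.val hpu
    obtain ⟨hv, -⟩ := SimpleGraph.Walk.concat_inj hww
    exact hv
  exact ⟨u0, b, hbu0.symm, fun z hz => huniq z u0 hz hbu0⟩

end LeafAux
section MainAux

variable {V : Type*} [Fintype V]

lemma formula_edgeless {G : SimpleGraph V} (h : ∀ a b : V, ¬ G.Adj a b) :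
    matchNum G = (core G).ncard + (fnVerts G).ncard / 2 := by
  rw [matchNum_eq_zero h]
  have hsupp : nullSupp G = Set.univ := by
    ext z
    simp only [Set.mem_univ, iff_true]
    refine ⟨fun _ => 1, ker_of_rows fun t => ?_, one_ne_zero⟩
    have hempty : G.neighborFinset t = ∅ := by
      ext a; simp [SimpleGraph.mem_neighborFinset, h t a]
    rw [hempty, Finset.sum_empty]
  have hcore : core G = ∅ := by
    ext z
    rw [mem_core_iff]
    simp only [Set.mem_empty_iff_false, iff_false]
    rintro ⟨t, -, hadj⟩
    exact h t z hadj
  have hfn : fnVerts G = ∅ := by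
    rw [fnVerts, hsupp]
    simp
  rw [hcore, hfn]
  simp

lemma avoid_edges_lt {G : SimpleGraph V} {u v : V} (huv : G.Adj u v) :
    (avoid G ({u} : Set V)).edgeSet.ncard < G.edgeSet.ncard := by
  apply Set.ncard_lt_ncard _ (Set.toFinite _)
  rw [Set.ssubset_iff_of_subset avoid_edgeSet_subset]
  exact ⟨s(u, v), (SimpleGraph.mem_edgeSet G).mpr huv,
    fun hc => not_mem_of_mem_avoid_edge hc (Sym2.mem_mk_left u v)⟩

lemma avoid_isAcyclic {G : SimpleGraph V} (hA : G.IsAcyclic) (S : Set V) :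
    (avoid G S).IsAcyclic := fun _ w hw =>
  hA (w.mapLe avoid_le) (hw.mapLe _)

lemma forest_formula : ∀ (n : ℕ) (G : SimpleGraph V), G.edgeSet.ncard ≤ n → G.IsAcyclic →
    matchNum G = (core G).ncard + (fnVerts G).ncard / 2 := by
  intro n
  induction n with
  | zero =>
    intro G hcard _
    have hzero : G.edgeSet.ncard = 0 := by omega
    have hE : G.edgeSet = ∅ := (Set.ncard_eq_zero (Set.toFinite _)).mp hzero
    refine formula_edgeless fun a b hab => ?_
    exact Set.eq_empty_iff_forall_notMem.mp hE s(a, b) ((SimpleGraph.mem_edgeSet G).mpr hab)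
  | succ n ih =>
    intro G hcard hA
    by_cases hE : ∃ a b, G.Adj a b
    · obtain ⟨a, b, hab⟩ := hE
      obtain ⟨u, v, huv, hleaf⟩ := exists_leaf hA hab
      have hlt := avoid_edges_lt huv
      have hrec := ih (avoid G ({u} : Set V)) (by omega) (avoid_isAcyclic hA _)
      rw [matchNum_leaf_step huv hleaf, hrec, rhs_leaf_step hA huv hleaf]
    · push_neg at hE
      exact formula_edgeless hE

end MainAux

theorem matchNum_tree_formula {V : Type*} [Fintype V] (G : SimpleGraph V) (hT : G.IsTree) :
    matchNum G = (core G).ncard + (fnVerts G).ncard / 2 :=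
  forest_formula G.edgeSet.ncard G le_rfl hT.2
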